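/- Marginal formula for tree-structured costs (Theorem 4.1): let (V, E) be a tree with V = [K], neighbour sets N_k, and leaves L = {k ∈ V : |N_k| = 1}, and let the cost decouple along its edges. For entrywise positive vectors φ^k ∈ ℝ^{n_k}, define for each ordered pair (k,ℓ) with {k,ℓ} ∈ E the vector α^{(k,ℓ)} ∈ ℝ^{n_k} recursively by α^{(k,ℓ)} = 𝒦^{(k,ℓ)} φ^ℓ if ℓ ∈ L, and α^{(k,ℓ)} = 𝒦^{(k,ℓ)} (φ^ℓ ⊙ ⨀_{t ∈ N_ℓ∖{k}} α^{(ℓ,t)}) otherwise (this recursion is well-founded since the tree has no circles). Then for every node k ∈ V, the k-th marginal satisfies P_k(𝒦 ⊙ Φ) = φ^k ⊙ ⨀_{ℓ ∈ N_k} α^{(k,ℓ)}. -/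

import Mathlib

/-!
Marginal formula for tree-structured costs (Theorem 4.1): let `G` be a tree on `[K]`
with the cost tensor decoupling along its edges, `𝒦ᵢ = exp(−Cᵢ/η)`, and let the vectors
`α^{(k,ℓ)}` (for adjacent `k, ℓ`) satisfy the tree recursion
`α^{(k,ℓ)} = 𝒦^{(k,ℓ)} φ^ℓ` if `ℓ` is a leaf, and
`α^{(k,ℓ)} = 𝒦^{(k,ℓ)} (φ^ℓ ⊙ ⨀_{t ∈ N_ℓ∖{k}} α^{(ℓ,t)})` otherwise.
Then `P_k(𝒦 ⊙ Φ) = φ^k ⊙ ⨀_{ℓ ∈ N_k} α^{(k,ℓ)}` for every node `k`.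
-/
set_option linter.unusedSectionVars false

open SimpleGraph

variable {V : Type*} [DecidableEq V] {G : SimpleGraph V}

/-- Parent existence: in a connected graph, every vertex `t ≠ r` has a neighbor
strictly closer to `r`. -/
lemma parent_exists (hconn : G.Connected) {t r : V} (ht : t ≠ r) :
    ∃ u, G.Adj t u ∧ G.dist u r + 1 = G.dist t r := by
  have hd : G.dist t r ≠ 0 := Nat.pos_iff_ne_zero.mp (hconn.pos_dist_of_ne ht)
  obtain ⟨p, hp⟩ := SimpleGraph.exists_walk_of_dist_ne_zero hd
  cases p with
  | nil => simp at hd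
  | cons h q =>
    rename_i u
    refine ⟨u, h, ?_⟩
    have h1 : G.dist u r ≤ q.length := SimpleGraph.dist_le q
    have h2 : G.dist t r ≤ G.dist t u + G.dist u r := hconn.dist_triangle
    have h3 : G.dist t u = 1 := SimpleGraph.dist_eq_one_iff_adj.mpr h
    simp [SimpleGraph.Walk.length_cons] at hp
    omega

/-- In a tree, adjacent vertices have different distances to any root. -/
lemma tree_adj_dist_ne (hG : G.IsTree) {m u r : V} (h : G.Adj m u) :
    G.dist m r ≠ G.dist u r := by
  intro heq
  set D := G.dist u r with hD
  rcases Nat.eq_zero_or_pos D with h0 | hpos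
  · -- both distances 0: m = r and u = r
    have hm : m = r := by
      have := hG.isConnected.pos_dist_of_ne (v := r) (u := m)
      by_contra hmr
      have := this hmr; omega
    have hu : u = r := by
      have := hG.isConnected.pos_dist_of_ne (v := r) (u := u)
      by_contra hur
      have := this hur; omega
    exact h.ne (hm.trans hu.symm)
  · obtain ⟨Q, hQpath, hQlen⟩ := hG.isConnected.exists_path_of_dist u r
    by_cases hm : m ∈ Q.support
    · -- shortcut: drop until m
      have htake := SimpleGraph.Walk.length_takeUntil_le Q hm
      have hspec := Q.take_spec hm
      have hlen : (Q.takeUntil m hm).length + (Q.dropUntil m hm).length = Q.length := by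
        rw [← SimpleGraph.Walk.length_append, hspec]
      have htake1 : 1 ≤ (Q.takeUntil m hm).length := by
        rcases Nat.eq_zero_or_pos (Q.takeUntil m hm).length with h0' | h1'
        · exact absurd (SimpleGraph.Walk.eq_of_length_eq_zero h0') h.ne'
        · exact h1'
      have hd : G.dist m r ≤ (Q.dropUntil m hm).length := SimpleGraph.dist_le _
      omega
    · -- extend to a longer path, contradicting uniqueness
      have hP : (SimpleGraph.Walk.cons h Q).IsPath := hQpath.cons hm
      obtain ⟨P', hP'path, hP'len⟩ := hG.isConnected.exists_path_of_dist m r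
      have heqp := (hG.existsUnique_path m r).unique hP hP'path
      have hc : P'.length = Q.length + 1 := by
        rw [← heqp]; simp
      omega

/-- In a tree, the neighbor strictly closer to the root is unique. -/
lemma tree_parent_unique (hG : G.IsTree) {m r u₁ u₂ : V}
    (h₁ : G.Adj m u₁) (hd₁ : G.dist u₁ r + 1 = G.dist m r)
    (h₂ : G.Adj m u₂) (hd₂ : G.dist u₂ r + 1 = G.dist m r) : u₁ = u₂ := by
  have key : ∀ (u : V) (h : G.Adj m u) (hd : G.dist u r + 1 = G.dist m r),
      ∃ (P : G.Walk u r), P.IsPath ∧ P.length = G.dist u r ∧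
        ((SimpleGraph.Walk.cons h P).IsPath ∧ (SimpleGraph.Walk.cons h P).length = G.dist m r) := by
    intro u h hd
    obtain ⟨P, hPpath, hPlen⟩ := hG.isConnected.exists_path_of_dist u r
    refine ⟨P, hPpath, hPlen, ?_, by simp [hPlen, hd]⟩
    refine hPpath.cons ?_
    intro hm
    have htake1 : 1 ≤ (P.takeUntil m hm).length := by
      rcases Nat.eq_zero_or_pos (P.takeUntil m hm).length with h0' | h1'
      · exact absurd (SimpleGraph.Walk.eq_of_length_eq_zero h0') h.ne'
      · exact h1'
    have hlen : (P.takeUntil m hm).length + (P.dropUntil m hm).length = P.length := by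
      rw [← SimpleGraph.Walk.length_append, P.take_spec hm]
    have hdm : G.dist m r ≤ (P.dropUntil m hm).length := SimpleGraph.dist_le _
    omega
  obtain ⟨P₁, _, _, hQ₁, _⟩ := key u₁ h₁ hd₁
  obtain ⟨P₂, _, _, hQ₂, _⟩ := key u₂ h₂ hd₂
  have := (hG.existsUnique_path m r).unique hQ₁ hQ₂
  have hsup := congrArg SimpleGraph.Walk.support this
  rw [SimpleGraph.Walk.support_cons, SimpleGraph.Walk.support_cons,
    P₁.support_eq_cons, P₂.support_eq_cons] at hsup
  have := List.tail_eq_of_cons_eq hsup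
  exact List.head_eq_of_cons_eq this

/-- Extract a leaf of the induced subtree. -/
lemma exists_subtree_leaf [Fintype V] [DecidableRel G.Adj] (hG : G.IsTree) {S : Finset V} {k : V}
    (hk : k ∈ S)
    (hgood : ∀ t ∈ S, t ≠ k → ∃ u ∈ S, G.Adj t u ∧ G.dist u k + 1 = G.dist t k)
    (hcard : 2 ≤ S.card) :
    ∃ m ∈ S, ∃ p ∈ S, m ≠ k ∧ G.Adj m p ∧ G.neighborFinset m ∩ S = {p} ∧
      (∀ t ∈ S.erase m, t ≠ k → ∃ u ∈ S.erase m, G.Adj t u ∧ G.dist u k + 1 = G.dist t k) := by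
  obtain ⟨m, hmS, hmax⟩ := S.exists_max_image (fun t => G.dist t k) ⟨k, hk⟩
  obtain ⟨t₀, ht₀S, ht₀k⟩ := Finset.exists_mem_ne (s := S) (by omega) k
  have hdt₀ : 0 < G.dist t₀ k := hG.isConnected.pos_dist_of_ne ht₀k
  have hdm : 0 < G.dist m k := lt_of_lt_of_le hdt₀ (hmax t₀ ht₀S)
  have hmk : m ≠ k := by rintro rfl; simp [SimpleGraph.dist_self] at hdm
  obtain ⟨p, hpS, hadj, hpd⟩ := hgood m hmS hmk
  refine ⟨m, hmS, p, hpS, hmk, hadj, ?_, ?_⟩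
  · ext u
    simp only [Finset.mem_inter, SimpleGraph.mem_neighborFinset, Finset.mem_singleton]
    constructor
    · rintro ⟨hadju, huS⟩
      have h1 : G.dist u k ≤ G.dist m k := hmax u huS
      have h2 : G.dist m k ≠ G.dist u k := tree_adj_dist_ne hG hadju
      have h3 : G.dist m k ≤ G.dist m u + G.dist u k := hG.isConnected.dist_triangle
      have h4 : G.dist m u = 1 := SimpleGraph.dist_eq_one_iff_adj.mpr hadju
      have h5 : G.dist u k + 1 = G.dist m k := by omega
      exact tree_parent_unique hG hadju h5 hadj hpd
    · rintro rfl; exact ⟨hadj, hpS⟩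
  · intro t htS htk
    obtain ⟨u, huS, hadju, hud⟩ := hgood t (S.mem_of_mem_erase htS) htk
    have htm : G.dist t k ≤ G.dist m k := hmax t (S.mem_of_mem_erase htS)
    refine ⟨u, Finset.mem_erase.mpr ⟨?_, huS⟩, hadju, hud⟩
    rintro rfl
    omega

/-- Reindexing: summing over all `i` equals summing over `i` pinned at `m` together
with a free value `v` for coordinate `m`. -/
lemma sum_update_pin {K : ℕ} {n : Fin K → ℕ} (m : Fin K) (d : ∀ t, Fin (n t))
    (F : (∀ t, Fin (n t)) → ℝ) :
    ∑ i : ∀ t, Fin (n t), F i =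
      ∑ i : ∀ t, Fin (n t), ∑ v : Fin (n m),
        if i m = d m then F (Function.update i m v) else 0 := by
  rw [Finset.sum_comm]
  have key : ∀ v : Fin (n m),
      (∑ i : ∀ t, Fin (n t), if i m = d m then F (Function.update i m v) else 0)
        = ∑ i : ∀ t, Fin (n t), if i m = v then F i else 0 := by
    intro v
    rw [← Finset.sum_filter, ← Finset.sum_filter]
    refine Finset.sum_nbij' (fun i => Function.update i m v)
      (fun i => Function.update i m (d m)) ?_ ?_ ?_ ?_ ?_
    · intro a ha; simp
    · intro a ha; simp
    · intro a ha
      simp only [Finset.mem_filter] at ha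
      show Function.update (Function.update a m v) m (d m) = a
      rw [Function.update_idem, ← ha.2, Function.update_eq_self]
    · intro a ha
      simp only [Finset.mem_filter] at ha
      show Function.update (Function.update a m (d m)) m v = a
      rw [Function.update_idem, ← ha.2, Function.update_eq_self]
    · intro a ha; rfl
  simp_rw [key]
  rw [Finset.sum_comm]
  congr 1; ext i
  simp

noncomputable def Wt {K d : ℕ} {n : Fin K → ℕ} (x : ∀ k, Fin (n k) → EuclideanSpace ℝ (Fin d))
    (η : ℝ) (i : ∀ t, Fin (n t)) : Sym2 (Fin K) → ℝ :=
  Sym2.lift ⟨fun a b => Real.exp (-‖x a (i a) - x b (i b)‖ ^ 2 / η),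
    fun a b => by dsimp only; rw [norm_sub_rev]⟩

lemma Wt_mk {K d : ℕ} {n : Fin K → ℕ} (x : ∀ k, Fin (n k) → EuclideanSpace ℝ (Fin d))
    (η : ℝ) (i : ∀ t, Fin (n t)) (a b : Fin K) :
    Wt x η i s(a, b) = Real.exp (-‖x a (i a) - x b (i b)‖ ^ 2 / η) := rfl

section Main

variable {K d : ℕ} {n : Fin K → ℕ}
  {x : ∀ k, Fin (n k) → EuclideanSpace ℝ (Fin d)}
  {G : SimpleGraph (Fin K)} [DecidableRel G.Adj]
  {η : ℝ} {φ : ∀ k, Fin (n k) → ℝ}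
  {α : ∀ (k ℓ : Fin K), Fin (n k) → ℝ}

set_option maxHeartbeats 1000000 in
lemma main_aux (hG : G.IsTree)
    (hleaf : ∀ k ℓ, G.Adj k ℓ → G.degree ℓ = 1 → ∀ j : Fin (n k),
      α k ℓ j = ∑ j' : Fin (n ℓ), Real.exp (-‖x k j - x ℓ j'‖ ^ 2 / η) * φ ℓ j')
    (hrec : ∀ k ℓ, G.Adj k ℓ → G.degree ℓ ≠ 1 → ∀ j : Fin (n k),
      α k ℓ j = ∑ j' : Fin (n ℓ), Real.exp (-‖x k j - x ℓ j'‖ ^ 2 / η) *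
        (φ ℓ j' * ∏ t ∈ G.neighborFinset ℓ \ {k}, α ℓ t j'))
    (k : Fin K) (j : Fin (n k)) (dflt : ∀ t, Fin (n t)) :
    ∀ (N : ℕ) (S : Finset (Fin K)), S.card = N → k ∈ S →
      (∀ t ∈ S, t ≠ k → ∃ u ∈ S, G.Adj t u ∧ G.dist u k + 1 = G.dist t k) →
      (∑ i : ∀ t, Fin (n t), if (i k = j ∧ ∀ t, t ∉ S → i t = dflt t) then
        (∏ e ∈ G.edgeFinset.filter (fun e => ∀ v ∈ e, v ∈ S), Wt x η i e)
          * ((∏ t ∈ S, φ t (i t)) * (∏ t ∈ S, ∏ u ∈ G.neighborFinset t \ S, α t u (i t)))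
        else 0)
      = φ k j * ∏ ℓ ∈ G.neighborFinset k, α k ℓ j := by
  intro N
  induction N using Nat.strong_induction_on with
  | _ N IH =>
  intro S hcard hk hgood
  rcases lt_or_ge S.card 2 with hlt | hge
  · -- base case : S = {k}
    have hS : S = {k} := by
      have h1 : S.card = 1 := by
        have : 0 < S.card := Finset.card_pos.mpr ⟨k, hk⟩
        omega
      obtain ⟨a, ha⟩ := Finset.card_eq_one.mp h1
      subst ha
      simp only [Finset.mem_singleton] at hk
      rw [hk]
    subst hS
    rw [Finset.sum_eq_single_of_mem (Function.update dflt k j) (Finset.mem_univ _)]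
    · rw [if_pos]
      · have hfe : G.edgeFinset.filter (fun e => ∀ v ∈ e, v ∈ ({k} : Finset (Fin K))) = ∅ := by
          rw [Finset.filter_eq_empty_iff]
          intro e he
          induction e with
          | _ a b =>
            intro hab
            have ha := hab a (Sym2.mem_mk_left a b)
            have hb := hab b (Sym2.mem_mk_right a b)
            simp only [Finset.mem_singleton] at ha hb
            subst ha; subst hb
            exact G.irrefl (SimpleGraph.mem_edgeFinset.mp he)
        rw [hfe]
        simp only [Finset.prod_empty, one_mul, Finset.prod_singleton,
          Function.update_self]
        congr 1
        have : G.neighborFinset k \ {k} = G.neighborFinset k := by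
          rw [Finset.sdiff_singleton_eq_erase, Finset.erase_eq_of_notMem]
          simp
        rw [this]
      · refine ⟨Function.update_self _ _ _, fun t ht => ?_⟩
        simp only [Finset.mem_singleton] at ht
        exact Function.update_of_ne ht _ _
    · intro b _ hb
      rw [if_neg]
      rintro ⟨hbk, hbt⟩
      apply hb
      funext t
      by_cases htk : t = k
      · subst htk; rw [hbk, Function.update_self]
      · rw [hbt t (by simpa using htk), Function.update_of_ne htk]
  · -- inductive step
    obtain ⟨m, hmS, p, hpS, hmk, hadj, hNm, hgood'⟩ := exists_subtree_leaf hG hk hgood hge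
    have hpm : p ≠ m := hadj.ne'
    have hmS' : m ∉ S.erase m := Finset.notMem_erase m S
    have hkS' : k ∈ S.erase m := Finset.mem_erase.mpr ⟨(Ne.symm hmk), hk⟩
    have hpS' : p ∈ S.erase m := Finset.mem_erase.mpr ⟨hpm, hpS⟩
    have hkm : k ≠ m := Ne.symm hmk
    -- the edge s(p,m) is not inside S.erase m
    have hnotin : s(p, m) ∉ G.edgeFinset.filter (fun e => ∀ v ∈ e, v ∈ S.erase m) := by
      simp only [Finset.mem_filter, not_and]
      intro _ hall
      exact hmS' (hall m (Sym2.mem_mk_right p m))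
    -- edges inside S = edges inside S.erase m plus s(p,m)
    have hfilter : G.edgeFinset.filter (fun e => ∀ v ∈ e, v ∈ S) =
        insert s(p, m) (G.edgeFinset.filter (fun e => ∀ v ∈ e, v ∈ S.erase m)) := by
      ext e
      induction e with
      | _ a b =>
        simp only [Finset.mem_filter, Finset.mem_insert, Sym2.mem_iff, forall_eq_or_imp,
          forall_eq, SimpleGraph.mem_edgeFinset, SimpleGraph.mem_edgeSet]
        constructor
        · rintro ⟨hab, haS, hbS⟩
          by_cases ham : a = m
          · subst ham
            have hb : b ∈ G.neighborFinset a ∩ S := by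
              simp [SimpleGraph.mem_neighborFinset, hab, hbS]
            rw [hNm] at hb
            simp only [Finset.mem_singleton] at hb
            subst hb
            left; rw [Sym2.eq_swap]
          · by_cases hbm : b = m
            · subst hbm
              have ha : a ∈ G.neighborFinset b ∩ S := by
                simp [SimpleGraph.mem_neighborFinset, hab.symm, haS]
              rw [hNm] at ha
              simp only [Finset.mem_singleton] at ha
              subst ha
              left; rfl
            · right
              exact ⟨hab, Finset.mem_erase.mpr ⟨ham, haS⟩, Finset.mem_erase.mpr ⟨hbm, hbS⟩⟩
        · rintro (heq | ⟨hab, haS', hbS'⟩)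
          · rw [Sym2.eq_iff] at heq
            rcases heq with ⟨rfl, rfl⟩ | ⟨rfl, rfl⟩
            · exact ⟨hadj.symm, hpS, hmS⟩
            · exact ⟨hadj, hmS, hpS⟩
          · exact ⟨hab, S.mem_of_mem_erase haS', S.mem_of_mem_erase hbS'⟩
    -- neighbours of m outside S are the neighbours other than p
    have hNmS : G.neighborFinset m \ S = G.neighborFinset m \ {p} := by
      ext u
      simp only [Finset.mem_sdiff, Finset.mem_singleton]
      constructor
      · rintro ⟨hu, huS⟩
        refine ⟨hu, ?_⟩
        rintro rfl; exact huS hpS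
      · rintro ⟨hu, hup⟩
        refine ⟨hu, fun huS => hup ?_⟩
        have : u ∈ G.neighborFinset m ∩ S := Finset.mem_inter.mpr ⟨hu, huS⟩
        rw [hNm] at this
        simpa using this
    -- the summed-out message
    have sumv : ∀ jp : Fin (n p),
        (∑ v : Fin (n m), Real.exp (-‖x p jp - x m v‖ ^ 2 / η) *
          (φ m v * ∏ u ∈ G.neighborFinset m \ {p}, α m u v)) = α p m jp := by
      intro jp
      by_cases hdeg : G.degree m = 1
      · have hNm1 : G.neighborFinset m = {p} := by
          obtain ⟨a, ha⟩ := Finset.card_eq_one.mp hdeg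
          have hp' : p ∈ G.neighborFinset m := (SimpleGraph.mem_neighborFinset G m p).mpr hadj
          rw [ha] at hp' ⊢
          simp only [Finset.mem_singleton] at hp'
          rw [hp']
        rw [hleaf p m hadj.symm hdeg jp]
        apply Finset.sum_congr rfl
        intro v _
        rw [hNm1]
        simp
      · rw [hrec p m hadj.symm hdeg jp]
    -- key pointwise identity after summing out the coordinate m
    have key : ∀ i : ∀ t, Fin (n t),
        (∑ v : Fin (n m), if i m = dflt m then
          (if ((Function.update i m v) k = j ∧ ∀ t, t ∉ S → (Function.update i m v) t = dflt t) then
            (∏ e ∈ G.edgeFinset.filter (fun e => ∀ v ∈ e, v ∈ S), Wt x η (Function.update i m v) e)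
              * ((∏ t ∈ S, φ t ((Function.update i m v) t)) *
                 (∏ t ∈ S, ∏ u ∈ G.neighborFinset t \ S, α t u ((Function.update i m v) t)))
          else 0) else 0)
        = (if (i k = j ∧ ∀ t, t ∉ S.erase m → i t = dflt t) then
            (∏ e ∈ G.edgeFinset.filter (fun e => ∀ v ∈ e, v ∈ S.erase m), Wt x η i e)
              * ((∏ t ∈ S.erase m, φ t (i t)) *
                 (α p m (i p) * ∏ t ∈ S.erase m, ∏ u ∈ G.neighborFinset t \ S, α t u (i t)))
          else 0) := by
      intro i
      by_cases hcond : (i k = j ∧ ∀ t, t ∉ S.erase m → i t = dflt t)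
      · have him : i m = dflt m := hcond.2 m hmS'
        rw [if_pos hcond]
        have hcond2 : ∀ v : Fin (n m),
            ((Function.update i m v) k = j ∧ ∀ t, t ∉ S → (Function.update i m v) t = dflt t) := by
          intro v
          constructor
          · rw [Function.update_of_ne hkm]; exact hcond.1
          · intro t htS
            have htm : t ≠ m := fun h => htS (h ▸ hmS)
            rw [Function.update_of_ne htm]
            exact hcond.2 t (fun h => htS (S.mem_of_mem_erase h))
        have hterm : ∀ v : Fin (n m),
            (if i m = dflt m then
              (if ((Function.update i m v) k = j ∧ ∀ t, t ∉ S → (Function.update i m v) t = dflt t) then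
                (∏ e ∈ G.edgeFinset.filter (fun e => ∀ v ∈ e, v ∈ S), Wt x η (Function.update i m v) e)
                  * ((∏ t ∈ S, φ t ((Function.update i m v) t)) *
                     (∏ t ∈ S, ∏ u ∈ G.neighborFinset t \ S, α t u ((Function.update i m v) t)))
              else 0) else 0)
            = ((∏ e ∈ G.edgeFinset.filter (fun e => ∀ v ∈ e, v ∈ S.erase m), Wt x η i e) *
                ((∏ t ∈ S.erase m, φ t (i t)) *
                 (∏ t ∈ S.erase m, ∏ u ∈ G.neighborFinset t \ S, α t u (i t)))) *
              (Real.exp (-‖x p (i p) - x m v‖ ^ 2 / η) *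
                (φ m v * ∏ u ∈ G.neighborFinset m \ {p}, α m u v)) := by
          intro v
          rw [if_pos him, if_pos (hcond2 v)]
          have hW : (∏ e ∈ G.edgeFinset.filter (fun e => ∀ v ∈ e, v ∈ S), Wt x η (Function.update i m v) e)
              = Real.exp (-‖x p (i p) - x m v‖ ^ 2 / η) *
                ∏ e ∈ G.edgeFinset.filter (fun e => ∀ v ∈ e, v ∈ S.erase m), Wt x η i e := by
            rw [hfilter, Finset.prod_insert hnotin]
            congr 1
            · rw [Wt_mk, Function.update_of_ne hpm, Function.update_self]
            · apply Finset.prod_congr rfl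
              intro e he
              induction e with
              | _ a b =>
                simp only [Finset.mem_filter, Sym2.mem_iff, forall_eq_or_imp, forall_eq] at he
                have ham : a ≠ m := (Finset.mem_erase.mp he.2.1).1
                have hbm : b ≠ m := (Finset.mem_erase.mp he.2.2).1
                rw [Wt_mk, Wt_mk, Function.update_of_ne ham, Function.update_of_ne hbm]
          have hφ : (∏ t ∈ S, φ t ((Function.update i m v) t))
              = φ m v * ∏ t ∈ S.erase m, φ t (i t) := by
            rw [← Finset.mul_prod_erase S _ hmS, Function.update_self]
            congr 1
            apply Finset.prod_congr rfl
            intro t ht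
            rw [Function.update_of_ne (Finset.mem_erase.mp ht).1]
          have hbnd : (∏ t ∈ S, ∏ u ∈ G.neighborFinset t \ S, α t u ((Function.update i m v) t))
              = (∏ u ∈ G.neighborFinset m \ {p}, α m u v) *
                ∏ t ∈ S.erase m, ∏ u ∈ G.neighborFinset t \ S, α t u (i t) := by
            rw [← Finset.mul_prod_erase S _ hmS, Function.update_self, hNmS]
            congr 1
            apply Finset.prod_congr rfl
            intro t ht
            rw [Function.update_of_ne (Finset.mem_erase.mp ht).1]
          rw [hW, hφ, hbnd]
          ring
        rw [Finset.sum_congr rfl (fun v _ => hterm v), ← Finset.mul_sum, sumv (i p)]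
        ring
      · rw [if_neg hcond]
        apply Finset.sum_eq_zero
        intro v _
        by_cases him : i m = dflt m
        · rw [if_pos him, if_neg]
          rintro ⟨h1, h2⟩
          apply hcond
          constructor
          · rw [Function.update_of_ne hkm] at h1; exact h1
          · intro t ht
            by_cases htm : t = m
            · subst htm; exact him
            · have htS : t ∉ S := fun hS => ht (Finset.mem_erase.mpr ⟨htm, hS⟩)
              have := h2 t htS
              rwa [Function.update_of_ne htm] at this
        · rw [if_neg him]
    -- boundary bookkeeping when passing from S to S.erase m
    have hmNpS : m ∉ G.neighborFinset p \ S := by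
      simp only [Finset.mem_sdiff, not_and, not_not]
      intro _; exact hmS
    have hNp : G.neighborFinset p \ S.erase m = insert m (G.neighborFinset p \ S) := by
      ext u
      simp only [Finset.mem_sdiff, Finset.mem_insert, Finset.mem_erase, not_and]
      constructor
      · rintro ⟨hu, hu2⟩
        by_cases hum : u = m
        · left; exact hum
        · right; exact ⟨hu, hu2 hum⟩
      · rintro (h | ⟨hu, huS⟩)
        · exact ⟨by rw [h]; exact (SimpleGraph.mem_neighborFinset G p m).mpr hadj.symm,
            fun hum => absurd h hum⟩
        · exact ⟨hu, fun _ => huS⟩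
    have hNt2 : ∀ t ∈ (S.erase m).erase p,
        G.neighborFinset t \ S.erase m = G.neighborFinset t \ S := by
      intro t ht
      have htp : t ≠ p := (Finset.mem_erase.mp ht).1
      have htS' : t ∈ S.erase m := (Finset.mem_erase.mp ht).2
      have hmNt : m ∉ G.neighborFinset t := by
        intro hmt
        have : t ∈ G.neighborFinset m ∩ S := by
          simp only [Finset.mem_inter, SimpleGraph.mem_neighborFinset] at *
          exact ⟨hmt.symm, S.mem_of_mem_erase htS'⟩
        rw [hNm] at this
        simp only [Finset.mem_singleton] at this
        exact htp this
      ext u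
      simp only [Finset.mem_sdiff, Finset.mem_erase, not_and]
      constructor
      · rintro ⟨hu, hu2⟩
        refine ⟨hu, ?_⟩
        have hum : u ≠ m := fun h => hmNt (h ▸ hu)
        exact hu2 hum
      · rintro ⟨hu, huS⟩
        exact ⟨hu, fun _ => huS⟩
    have hbd : ∀ i : ∀ t, Fin (n t),
        α p m (i p) * ∏ t ∈ S.erase m, ∏ u ∈ G.neighborFinset t \ S, α t u (i t)
          = ∏ t ∈ S.erase m, ∏ u ∈ G.neighborFinset t \ S.erase m, α t u (i t) := by
      intro i
      rw [← Finset.mul_prod_erase (S.erase m) _ hpS',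
        ← Finset.mul_prod_erase (S.erase m) (fun t => ∏ u ∈ G.neighborFinset t \ S.erase m, α t u (i t)) hpS',
        hNp, Finset.prod_insert hmNpS]
      rw [show (∏ t ∈ (S.erase m).erase p, ∏ u ∈ G.neighborFinset t \ S.erase m, α t u (i t))
           = ∏ t ∈ (S.erase m).erase p, ∏ u ∈ G.neighborFinset t \ S, α t u (i t) from
         Finset.prod_congr rfl (fun t ht => by rw [hNt2 t ht])]
      ring
    have step3 : ∀ i : ∀ t, Fin (n t),
        (if (i k = j ∧ ∀ t, t ∉ S.erase m → i t = dflt t) then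
            (∏ e ∈ G.edgeFinset.filter (fun e => ∀ v ∈ e, v ∈ S.erase m), Wt x η i e)
              * ((∏ t ∈ S.erase m, φ t (i t)) *
                 (α p m (i p) * ∏ t ∈ S.erase m, ∏ u ∈ G.neighborFinset t \ S, α t u (i t)))
          else 0)
        = (if (i k = j ∧ ∀ t, t ∉ S.erase m → i t = dflt t) then
            (∏ e ∈ G.edgeFinset.filter (fun e => ∀ v ∈ e, v ∈ S.erase m), Wt x η i e)
              * ((∏ t ∈ S.erase m, φ t (i t)) *
                 (∏ t ∈ S.erase m, ∏ u ∈ G.neighborFinset t \ S.erase m, α t u (i t)))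
          else 0) := by
      intro i
      by_cases hcond : (i k = j ∧ ∀ t, t ∉ S.erase m → i t = dflt t)
      · rw [if_pos hcond, if_pos hcond, hbd i]
      · rw [if_neg hcond, if_neg hcond]
    rw [sum_update_pin m dflt, Finset.sum_congr rfl (fun i _ => key i),
      Finset.sum_congr rfl (fun i _ => step3 i)]
    exact IH (N - 1) (by omega) (S.erase m)
      (by rw [Finset.card_erase_of_mem hmS, hcard]) hkS' hgood'

lemma alpha_zero (hG : G.IsTree)
    (hleaf : ∀ k ℓ, G.Adj k ℓ → G.degree ℓ = 1 → ∀ j : Fin (n k),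
      α k ℓ j = ∑ j' : Fin (n ℓ), Real.exp (-‖x k j - x ℓ j'‖ ^ 2 / η) * φ ℓ j')
    (hrec : ∀ k ℓ, G.Adj k ℓ → G.degree ℓ ≠ 1 → ∀ j : Fin (n k),
      α k ℓ j = ∑ j' : Fin (n ℓ), Real.exp (-‖x k j - x ℓ j'‖ ^ 2 / η) *
        (φ ℓ j' * ∏ t ∈ G.neighborFinset ℓ \ {k}, α ℓ t j'))
    (t₀ : Fin K) (ht₀ : n t₀ = 0) :
    ∀ (D : ℕ) (p q : Fin K), G.Adj p q → G.dist q t₀ = D → G.dist q t₀ < G.dist p t₀ →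
      ∀ jp : Fin (n p), α p q jp = 0 := by
  intro D
  induction D using Nat.strong_induction_on with
  | _ D IH =>
  intro p q hpq hdq hlt jp
  rcases Nat.eq_zero_or_pos D with h0 | hDpos
  · subst h0
    have hq : q = t₀ := by
      by_contra hne
      have := hG.isConnected.pos_dist_of_ne hne
      omega
    subst hq
    have hE : IsEmpty (Fin (n q)) := ⟨fun v => absurd v.isLt (by omega)⟩
    by_cases hdeg : G.degree q = 1
    · rw [hleaf p q hpq hdeg jp, Finset.univ_eq_empty, Finset.sum_empty]
    · rw [hrec p q hpq hdeg jp, Finset.univ_eq_empty, Finset.sum_empty]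
  · have hq : q ≠ t₀ := by
      intro h
      rw [h, SimpleGraph.dist_self] at hdq
      omega
    obtain ⟨u, hqu, hud⟩ := parent_exists hG.isConnected (t := q) (r := t₀) hq
    have hup : u ≠ p := by
      intro h
      rw [h] at hud
      omega
    have hdeg : G.degree q ≠ 1 := by
      intro hdeg
      obtain ⟨a, ha⟩ := Finset.card_eq_one.mp hdeg
      have hp' : p ∈ G.neighborFinset q := (SimpleGraph.mem_neighborFinset G q p).mpr hpq.symm
      have hu' : u ∈ G.neighborFinset q := (SimpleGraph.mem_neighborFinset G q u).mpr hqu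
      rw [ha] at hp' hu'
      simp only [Finset.mem_singleton] at hp' hu'
      exact hup (hu'.trans hp'.symm)
    rw [hrec p q hpq hdeg jp]
    apply Finset.sum_eq_zero
    intro j' _
    have humem : u ∈ G.neighborFinset q \ {p} := by
      simp only [Finset.mem_sdiff, Finset.mem_singleton, SimpleGraph.mem_neighborFinset]
      exact ⟨hqu, hup⟩
    rw [Finset.prod_eq_zero humem (IH (G.dist u t₀) (by omega) q u hqu rfl (by omega) j')]
    ring

end Main

set_option maxHeartbeats 1000000 in
theorem tree_marginal_formula
    (K d : ℕ) (n : Fin K → ℕ)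
    (x : ∀ k, Fin (n k) → EuclideanSpace ℝ (Fin d))
    (G : SimpleGraph (Fin K)) [DecidableRel G.Adj] (hG : G.IsTree)
    (η : ℝ) (hη : 0 < η)
    (φ : ∀ k, Fin (n k) → ℝ) (hφ : ∀ k j, 0 < φ k j)
    (α : ∀ (k ℓ : Fin K), Fin (n k) → ℝ)
    (hleaf : ∀ k ℓ, G.Adj k ℓ → G.degree ℓ = 1 → ∀ j : Fin (n k),
      α k ℓ j = ∑ j' : Fin (n ℓ), Real.exp (-‖x k j - x ℓ j'‖ ^ 2 / η) * φ ℓ j')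
    (hrec : ∀ k ℓ, G.Adj k ℓ → G.degree ℓ ≠ 1 → ∀ j : Fin (n k),
      α k ℓ j = ∑ j' : Fin (n ℓ), Real.exp (-‖x k j - x ℓ j'‖ ^ 2 / η) *
        (φ ℓ j' * ∏ t ∈ G.neighborFinset ℓ \ {k}, α ℓ t j')) :
    ∀ (k : Fin K) (j : Fin (n k)),
      (∑ i : ∀ k, Fin (n k), if i k = j then
          Real.exp (-(∑ e ∈ G.edgeFinset,
              Sym2.lift ⟨fun k₁ k₂ => ‖x k₁ (i k₁) - x k₂ (i k₂)‖ ^ 2,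
                fun k₁ k₂ => by dsimp only; rw [norm_sub_rev]⟩ e) / η)
            * ∏ t, φ t (i t)
        else 0)
      = φ k j * ∏ ℓ ∈ G.neighborFinset k, α k ℓ j := by
  intro k j
  by_cases hzero : ∃ t, n t = 0
  · obtain ⟨t₀, ht₀⟩ := hzero
    have hkt₀ : k ≠ t₀ := by intro h; subst h; exact absurd j.isLt (by omega)
    have hE : IsEmpty (∀ t, Fin (n t)) := ⟨fun i => absurd (i t₀).isLt (by omega)⟩
    rw [Finset.univ_eq_empty, Finset.sum_empty]
    obtain ⟨u, hku, hud⟩ := parent_exists hG.isConnected (t := k) (r := t₀) hkt₀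
    have humem : u ∈ G.neighborFinset k := (SimpleGraph.mem_neighborFinset G k u).mpr hku
    rw [Finset.prod_eq_zero humem
      (alpha_zero hG hleaf hrec t₀ ht₀ (G.dist u t₀) k u hku rfl (by omega) j)]
    ring
  · push_neg at hzero
    have dflt : ∀ t, Fin (n t) := fun t => ⟨0, Nat.pos_of_ne_zero (hzero t)⟩
    have hgood : ∀ t ∈ (Finset.univ : Finset (Fin K)), t ≠ k →
        ∃ u ∈ (Finset.univ : Finset (Fin K)), G.Adj t u ∧ G.dist u k + 1 = G.dist t k := by
      intro t _ htk
      obtain ⟨u, hu1, hu2⟩ := parent_exists hG.isConnected htk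
      exact ⟨u, Finset.mem_univ u, hu1, hu2⟩
    have hmain := main_aux hG hleaf hrec k j dflt Finset.univ.card Finset.univ rfl
      (Finset.mem_univ k) hgood
    rw [← hmain]
    apply Finset.sum_congr rfl
    intro i _
    by_cases hik : i k = j
    · rw [if_pos hik, if_pos ⟨hik, fun t ht => absurd (Finset.mem_univ t) ht⟩]
      have h1 : G.edgeFinset.filter (fun e => ∀ v ∈ e, v ∈ (Finset.univ : Finset (Fin K)))
          = G.edgeFinset := Finset.filter_true_of_mem (fun e _ => fun v _ => Finset.mem_univ v)
      have h2 : ∀ t : Fin K, G.neighborFinset t \ (Finset.univ : Finset (Fin K)) = ∅ := by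
        intro t
        simp
      have h3 : Real.exp (-(∑ e ∈ G.edgeFinset,
            Sym2.lift ⟨fun k₁ k₂ => ‖x k₁ (i k₁) - x k₂ (i k₂)‖ ^ 2,
              fun k₁ k₂ => by dsimp only; rw [norm_sub_rev]⟩ e) / η)
          = ∏ e ∈ G.edgeFinset, Wt x η i e := by
        have : (-(∑ e ∈ G.edgeFinset,
            Sym2.lift ⟨fun k₁ k₂ => ‖x k₁ (i k₁) - x k₂ (i k₂)‖ ^ 2,
              fun k₁ k₂ => by dsimp only; rw [norm_sub_rev]⟩ e) / η)
            = ∑ e ∈ G.edgeFinset, (-(Sym2.lift ⟨fun k₁ k₂ => ‖x k₁ (i k₁) - x k₂ (i k₂)‖ ^ 2,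
              fun k₁ k₂ => by dsimp only; rw [norm_sub_rev]⟩ e) / η) := by
          rw [← Finset.sum_div, ← Finset.sum_neg_distrib]
        rw [this, Real.exp_sum]
        apply Finset.prod_congr rfl
        intro e _
        induction e with
        | _ a b => rw [Wt_mk]; simp [neg_div]
      rw [h3, h1]
      congr 1
      simp_rw [h2, Finset.prod_empty, Finset.prod_const_one, mul_one]
    · rw [if_neg hik, if_neg (fun h => hik h.1)]
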